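/- If φ(t) = exp(-α(t)) is an increasing differentiable weight function on (0, t₀) with φ(0)=0 satisfying the doubling condition φ(2t) ≤ β·φ(t), and its inverse u = φ⁻¹ satisfies log(1/u(t²)) ≤ β·log(1/u(t)) for all small t > 0 (with some constant β > 1), then log log(1/r) = o(α(r)) as r → 0. -/

import Mathlib

open Filter Set Real

set_option maxHeartbeats 1000000

/-- If `φ(t) = exp(-α(t))` is an increasing differentiable weight
function on `(0, t₀)` with `φ(0⁺) = 0` satisfying the doubling condition
`φ(2t) ≤ β φ(t)`, and its inverse `u = φ⁻¹` satisfies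
`log(1/u(t²)) ≤ β log(1/u(t))` for all small `t > 0` (with `β > 1`), then
`log log (1/r) = o(α(r))` as `r → 0⁺`, where `α(t) = log(1/φ(t))`. -/
theorem stmt0
    (t₀ β : ℝ) (ht₀ : 0 < t₀) (hβ : 1 < β)
    (φ u : ℝ → ℝ)
    (hpos : ∀ t ∈ Ioo 0 t₀, 0 < φ t)
    (hmono : StrictMonoOn φ (Ioo 0 t₀))
    (hdiff : ∀ t ∈ Ioo 0 t₀, DifferentiableAt ℝ φ t)
    (hlim : Tendsto φ (nhdsWithin 0 (Ioi 0)) (nhds 0))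
    (hdoub : ∀ᶠ t in nhdsWithin 0 (Ioi 0), φ (2 * t) ≤ β * φ t)
    (huinv : ∀ᶠ t in nhdsWithin 0 (Ioi 0), u (φ t) = t ∧ φ (u t) = t ∧ 0 < u t)
    (hu : ∀ᶠ t in nhdsWithin 0 (Ioi 0),
      Real.log (1 / u (t ^ 2)) ≤ β * Real.log (1 / u t)) :
    (fun r => Real.log (Real.log (1 / r)))
      =o[nhdsWithin 0 (Ioi 0)] (fun r => Real.log (1 / φ r)) := by
  have hβ0 : (0:ℝ) < β := lt_trans one_pos hβ
  -- extract a uniform threshold δ' for `huinv` and `hu`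
  obtain ⟨δ', hδ'pos, hδ'⟩ := mem_nhdsGT_iff_exists_Ioc_subset.mp (huinv.and hu)
  have hP : ∀ t : ℝ, 0 < t → t ≤ δ' →
      (u (φ t) = t ∧ φ (u t) = t ∧ 0 < u t) ∧
        Real.log (1 / u (t ^ 2)) ≤ β * Real.log (1 / u t) :=
    fun t h1 h2 => hδ' ⟨h1, h2⟩
  have hδ'0 : (0:ℝ) < δ' := hδ'pos
  -- find ρ' such that φ < min δ' 1 on (0, ρ']
  have hmin : (0:ℝ) < min δ' 1 := lt_min hδ'0 one_pos
  obtain ⟨ρ', hρ'pos, hρ'⟩ := mem_nhdsGT_iff_exists_Ioc_subset.mp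
    (hlim.eventually (gt_mem_nhds hmin))
  have hρ'0 : (0:ℝ) < ρ' := hρ'pos
  -- choose ρ
  set ρ : ℝ := min (min (min δ' t₀ / 2) ρ') (1/2) with hρdef
  have hρpos : 0 < ρ := by
    refine lt_min (lt_min (by positivity) hρ'0) (by norm_num)
  have hρδ' : ρ ≤ δ' := by
    have h1 : ρ ≤ min δ' t₀ / 2 := le_trans (min_le_left _ _) (min_le_left _ _)
    have h2 : min δ' t₀ ≤ δ' := min_le_left _ _
    linarith [lt_min hδ'0 ht₀]
  have hρt₀ : ρ < t₀ := by
    have h1 : ρ ≤ min δ' t₀ / 2 := le_trans (min_le_left _ _) (min_le_left _ _)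
    have h2 : min δ' t₀ ≤ t₀ := min_le_right _ _
    linarith [lt_min hδ'0 ht₀]
  have hρρ' : ρ ≤ ρ' := le_trans (min_le_left _ _) (min_le_right _ _)
  have hρ1 : ρ < 1 := lt_of_le_of_lt (min_le_right _ _) (by norm_num)
  set t₁ : ℝ := φ ρ with ht₁def
  have ht₁pos : 0 < t₁ := hpos ρ ⟨hρpos, hρt₀⟩
  have ht₁min : t₁ < min δ' 1 := hρ' ⟨hρpos, hρρ'⟩
  have ht₁δ' : t₁ < δ' := lt_of_lt_of_le ht₁min (min_le_left _ _)
  have ht₁1 : t₁ < 1 := lt_of_lt_of_le ht₁min (min_le_right _ _)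
  set c : ℝ := -Real.log t₁ with hcdef
  have hc0 : 0 < c := by
    have := Real.log_neg ht₁pos ht₁1
    linarith
  -- the inverse function is well-behaved on (0, t₁]
  have hU : ∀ s : ℝ, 0 < s → s ≤ t₁ → 0 < u s ∧ u s ≤ ρ ∧ φ (u s) = s := by
    intro s hs hst₁
    have hev : ∀ᶠ w in nhdsWithin (0:ℝ) (Ioi 0), (φ w < s ∧ w < ρ) ∧ w ∈ Ioi (0:ℝ) :=
      ((hlim.eventually (gt_mem_nhds hs)).and
        ((gt_mem_nhds hρpos).filter_mono nhdsWithin_le_nhds)).and eventually_mem_nhdsWithin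
    obtain ⟨w, ⟨hw1, hw2⟩, hw0⟩ := hev.exists
    have hw0' : (0:ℝ) < w := hw0
    have hcont : ContinuousOn φ (Icc w ρ) := by
      intro x hx
      exact ((hdiff x ⟨lt_of_lt_of_le hw0' hx.1, lt_of_le_of_lt hx.2 hρt₀⟩).continuousAt).continuousWithinAt
    have hsmem : s ∈ Icc (φ w) (φ ρ) := ⟨le_of_lt hw1, hst₁⟩
    obtain ⟨t', ht'mem, ht'⟩ := intermediate_value_Icc (le_of_lt hw2) hcont hsmem
    have ht'pos : 0 < t' := lt_of_lt_of_le hw0' ht'mem.1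
    have huφ := (hP t' ht'pos (le_trans ht'mem.2 hρδ')).1.1
    rw [ht'] at huφ
    refine ⟨huφ ▸ ht'pos, huφ ▸ ht'mem.2, by rw [huφ, ht']⟩
  set M : ℝ := Real.log (1 / u (t₁ ^ 2)) with hMdef
  have ht₁sq_pos : 0 < t₁ ^ 2 := by positivity
  have ht₁sq_le : t₁ ^ 2 ≤ t₁ := by nlinarith
  obtain ⟨hu1, hu2, hu3⟩ := hU (t₁ ^ 2) ht₁sq_pos ht₁sq_le
  have hM : 0 < M := by
    apply Real.log_pos
    apply one_lt_one_div hu1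
    exact lt_of_le_of_lt hu2 hρ1
  -- comparison: if t₁² ≤ s ≤ t₁ then log(1/u s) ≤ M
  have hcomp : ∀ s : ℝ, t₁ ^ 2 ≤ s → s ≤ t₁ → Real.log (1 / u s) ≤ M := by
    intro s hs1 hs2
    have hs0 : 0 < s := lt_of_lt_of_le ht₁sq_pos hs1
    obtain ⟨hv1, hv2, hv3⟩ := hU s hs0 hs2
    have hle : u (t₁ ^ 2) ≤ u s := by
      have := (hmono.le_iff_le (a := u (t₁ ^ 2)) (b := u s)
        ⟨hu1, lt_of_le_of_lt hu2 hρt₀⟩ ⟨hv1, lt_of_le_of_lt hv2 hρt₀⟩).mp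
      apply this
      rw [hu3, hv3]; exact hs1
    rw [hMdef]
    rw [Real.log_le_log_iff (by positivity) (by positivity)]
    exact one_div_le_one_div_of_le hu1 hle
  -- main estimate
  rw [Asymptotics.isLittleO_iff]
  intro ε hε
  set K : ℝ := |Real.log M| + |Real.log β| + 1 with hKdef
  have hKpos : 0 < K := by positivity
  have hsmall : ∀ᶠ n : ℕ in atTop, K * (n + 1) ≤ ε * (c * 2 ^ n) := by
    have h1 : (fun n : ℕ => ((n:ℝ) + 1)) =o[atTop] (fun n : ℕ => (2:ℝ) ^ n) := by
      refine (isLittleO_coe_const_pow_of_one_lt (R := ℝ) one_lt_two).add ?_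
      simpa using isLittleO_pow_const_const_pow_of_one_lt (R := ℝ) 0 one_lt_two
    have hεcK : (0:ℝ) < ε * c / K := by positivity
    filter_upwards [h1.def hεcK] with n hn
    rw [Real.norm_eq_abs, Real.norm_eq_abs, abs_of_nonneg (by positivity : (0:ℝ) ≤ (n:ℝ)+1),
      abs_of_nonneg (by positivity : (0:ℝ) ≤ (2:ℝ)^n)] at hn
    have hmul := mul_le_mul_of_nonneg_left hn hKpos.le
    have heq : K * (ε * c / K * 2 ^ n) = ε * (c * 2 ^ n) := by
      field_simp
    rw [← heq]
    exact hmul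
  obtain ⟨N, hN⟩ := eventually_atTop.mp hsmall
  have hKN : (0:ℝ) < t₁ ^ (2 ^ (N+1)) := pow_pos ht₁pos _
  have hmain : ∀ᶠ r in nhdsWithin (0:ℝ) (Ioi 0),
      (r ∈ Ioi (0:ℝ) ∧ r < ρ) ∧ r < Real.exp (-1) ∧ φ r < t₁ ^ (2 ^ (N+1)) := by
    refine (eventually_mem_nhdsWithin.and
      ((gt_mem_nhds hρpos).filter_mono nhdsWithin_le_nhds)).and ?_
    exact ((gt_mem_nhds (Real.exp_pos _)).filter_mono nhdsWithin_le_nhds).and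
      (hlim.eventually (gt_mem_nhds hKN))
  filter_upwards [hmain] with r hr
  obtain ⟨⟨hr0', hrρ⟩, hre, hrφ⟩ := hr
  have hr0 : (0:ℝ) < r := hr0'
  set t : ℝ := φ r with htdef
  have ht0 : 0 < t := hpos r ⟨hr0, lt_trans hrρ hρt₀⟩
  have ht₁pow_le : t₁ ^ (2 ^ (N+1)) ≤ t₁ := by
    apply pow_le_of_le_one ht₁pos.le ht₁1.le
    positivity
  have ht1 : t < 1 := lt_of_lt_of_le hrφ (le_trans ht₁pow_le ht₁1.le)
  set a : ℝ := Real.log (1 / t) with hadef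
  have ha0 : 0 < a := Real.log_pos (one_lt_one_div ht0 ht1)
  have ha_eq : a = -Real.log t := by rw [hadef, one_div, Real.log_inv]
  -- a > c * 2^(N+1)
  have haN : c * 2 ^ (N+1) < a := by
    have h1 : Real.log t < Real.log (t₁ ^ (2 ^ (N+1))) := Real.log_lt_log ht0 hrφ
    rw [Real.log_pow] at h1
    push_cast at h1
    rw [ha_eq, hcdef]
    linarith only [h1]
  have h2N2 : (2:ℝ) ≤ 2 ^ (N+1) := by
    calc (2:ℝ) = 2 ^ 1 := (pow_one 2).symm
      _ ≤ 2 ^ (N+1) := pow_le_pow_right₀ (by norm_num) (by omega)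
  set n : ℕ := Nat.log 2 ⌊a / c⌋₊ with hndef
  have hfl1 : 1 ≤ ⌊a / c⌋₊ := by
    apply Nat.le_floor
    rw [Nat.cast_one, le_div_iff₀ hc0]
    have h5 := mul_le_mul_of_nonneg_left h2N2 hc0.le
    linarith only [haN, h5, hc0]
  have h2na : (2:ℝ) ^ n * c ≤ a := by
    have h1 : 2 ^ n ≤ ⌊a / c⌋₊ := Nat.pow_log_le_self 2 (by omega)
    have h2 : ((2:ℝ) ^ n) ≤ (⌊a / c⌋₊ : ℝ) := by exact_mod_cast h1
    have h3 : (⌊a / c⌋₊ : ℝ) ≤ a / c := Nat.floor_le (by positivity)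
    have h4 : (2:ℝ) ^ n ≤ a / c := le_trans h2 h3
    rwa [← le_div_iff₀ hc0]
  have han : a < (2:ℝ) ^ (n+1) * c := by
    have h1 : ⌊a / c⌋₊ < 2 ^ (n+1) := Nat.lt_pow_succ_log_self (by norm_num) _
    have h2 : a / c < (⌊a / c⌋₊ : ℝ) + 1 := Nat.lt_floor_add_one _
    have h3 : ((⌊a / c⌋₊ : ℝ) + 1) ≤ ((2:ℕ) ^ (n+1) : ℝ) := by
      have : ⌊a / c⌋₊ + 1 ≤ 2 ^ (n+1) := by omega
      exact_mod_cast this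
    have h4 : a / c < (2:ℝ) ^ (n+1) := by
      calc a / c < (⌊a / c⌋₊ : ℝ) + 1 := h2
        _ ≤ ((2:ℕ) ^ (n+1) : ℝ) := h3
        _ = (2:ℝ) ^ (n+1) := by push_cast; ring
    rwa [← div_lt_iff₀ hc0]
  have hNn : N ≤ n := by
    have h0 : c * 2 ^ (N+1) < 2 ^ (n+1) * c := lt_trans haN han
    have h1 : (2:ℝ) ^ (N+1) < (2:ℝ) ^ (n+1) := by
      rw [mul_comm] at h0
      exact (mul_lt_mul_iff_left₀ hc0).mp h0
    have h2 : N + 1 < n + 1 := (pow_lt_pow_iff_right₀ one_lt_two).mp h1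
    omega
  -- the sequence s k = t ^ ((1/2)^k)
  set s : ℕ → ℝ := fun k => t ^ (((2:ℝ)⁻¹) ^ k) with hsdef
  have hs0 : ∀ k, 0 < s k := fun k => Real.rpow_pos_of_pos ht0 _
  have hslog : ∀ k, Real.log (s k) = ((2:ℝ)⁻¹) ^ k * Real.log t :=
    fun k => Real.log_rpow ht0 _
  have hsmono : ∀ k, k ≤ n → s k ≤ s n := by
    intro k hk
    exact Real.rpow_le_rpow_of_exponent_ge ht0 ht1.le
      (pow_le_pow_of_le_one (by norm_num) (by norm_num) hk)
  have hinv_pow : ∀ k : ℕ, ((2:ℝ)⁻¹) ^ k = ((2:ℝ) ^ k)⁻¹ := fun k => by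
    rw [inv_pow]
  have hpow2n : (0:ℝ) < 2 ^ n := by positivity
  have hlogt : Real.log t = -a := by rw [ha_eq]; ring
  have hlogt₁ : Real.log t₁ = -c := by rw [hcdef]; ring
  have hsn_le_t₁ : s n ≤ t₁ := by
    have h1 : Real.log (s n) ≤ Real.log t₁ := by
      rw [hslog, hinv_pow, hlogt, hlogt₁]
      have h6 := mul_le_mul_of_nonneg_left h2na (inv_nonneg.mpr hpow2n.le)
      rw [← mul_assoc, inv_mul_cancel₀ hpow2n.ne', one_mul] at h6
      linarith only [h6]
    calc s n = Real.exp (Real.log (s n)) := (Real.exp_log (hs0 n)).symm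
      _ ≤ Real.exp (Real.log t₁) := Real.exp_le_exp.mpr h1
      _ = t₁ := Real.exp_log ht₁pos
  have hsn_ge : t₁ ^ 2 ≤ s n := by
    have h1 : Real.log (t₁ ^ 2) ≤ Real.log (s n) := by
      rw [hslog, hinv_pow, Real.log_pow, hlogt, hlogt₁]
      have h7 := mul_lt_mul_of_pos_left han (inv_pos.mpr hpow2n)
      rw [pow_succ] at h7
      have h8 : ((2:ℝ) ^ n)⁻¹ * (2 ^ n * 2 * c) = 2 * c := by
        field_simp
      push_cast
      linarith only [h7, h8]
    calc t₁ ^ 2 = Real.exp (Real.log (t₁ ^ 2)) := (Real.exp_log ht₁sq_pos).symm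
      _ ≤ Real.exp (Real.log (s n)) := Real.exp_le_exp.mpr h1
      _ = s n := Real.exp_log (hs0 n)
  -- iteration
  have hchain : ∀ m : ℕ, m ≤ n →
      Real.log (1 / u (s (n - m))) ≤ β ^ m * Real.log (1 / u (s n)) := by
    intro m
    induction m with
    | zero => intro _; simp
    | succ m ih =>
      intro hm
      have hm' : m ≤ n := by omega
      have hsq : s (n - (m+1)) = s (n - m) ^ 2 := by
        have hk : n - m = (n - (m+1)) + 1 := by omega
        rw [hsdef]
        simp only [hk]
        rw [← Real.rpow_natCast (t ^ (((2:ℝ)⁻¹) ^ ((n - (m+1)) + 1))) 2,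
          ← Real.rpow_mul ht0.le]
        congr 1
        rw [pow_succ]
        push_cast
        ring
      have hsnm_pos := hs0 (n - m)
      have hsnm_le : s (n - m) ≤ δ' :=
        le_of_lt (lt_of_le_of_lt (le_trans (hsmono _ (by omega)) hsn_le_t₁) ht₁δ')
      have happ := (hP (s (n - m)) hsnm_pos hsnm_le).2
      rw [← hsq] at happ
      calc Real.log (1 / u (s (n - (m+1)))) ≤ β * Real.log (1 / u (s (n - m))) := happ
        _ ≤ β * (β ^ m * Real.log (1 / u (s n))) :=
            mul_le_mul_of_nonneg_left (ih hm') hβ0.le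
        _ = β ^ (m+1) * Real.log (1 / u (s n)) := by ring
  have hchain_n := hchain n le_rfl
  rw [Nat.sub_self] at hchain_n
  have hs0_eq : s 0 = t := by
    rw [hsdef]
    simp [Real.rpow_one]
  have hut : u t = r := by
    have := (hP r hr0 (le_of_lt (lt_of_lt_of_le hrρ hρδ'))).1.1
    rw [← htdef] at this
    exact this
  rw [hs0_eq, hut] at hchain_n
  have hJn : Real.log (1 / u (s n)) ≤ M := hcomp (s n) hsn_ge hsn_le_t₁
  have hfinal : Real.log (1 / r) ≤ β ^ n * M :=
    le_trans hchain_n (mul_le_mul_of_nonneg_left hJn (by positivity))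
  -- log of both sides
  have hlr1 : 1 < Real.log (1 / r) := by
    have h1 : Real.log r < Real.log (Real.exp (-1)) := Real.log_lt_log hr0 hre
    rw [Real.log_exp] at h1
    rw [one_div, Real.log_inv]
    linarith
  have hlr0 : 0 < Real.log (1 / r) := lt_trans one_pos hlr1
  have hlog2 : Real.log (Real.log (1 / r)) ≤ Real.log (β ^ n * M) :=
    (Real.log_le_log_iff hlr0 (by positivity)).mpr hfinal
  have hlog3 : Real.log (β ^ n * M) = n * Real.log β + Real.log M := by
    rw [Real.log_mul (by positivity) hM.ne', Real.log_pow]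
  have hmid : (n:ℝ) * Real.log β + Real.log M ≤ K * ((n:ℝ) + 1) := by
    have h1 : (n:ℝ) * Real.log β ≤ (n:ℝ) * |Real.log β| :=
      mul_le_mul_of_nonneg_left (le_abs_self _) (by positivity)
    have h2 : Real.log M ≤ |Real.log M| := le_abs_self _
    have h3 : |Real.log β| ≤ K := by rw [hKdef]; linarith only [abs_nonneg (Real.log M)]
    have h4 : |Real.log M| ≤ K := by rw [hKdef]; linarith only [abs_nonneg (Real.log β)]
    have h5 := mul_le_mul_of_nonneg_left h3 (Nat.cast_nonneg (α := ℝ) n)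
    linarith only [h1, h2, h4, h5]
  have hεbound : K * ((n:ℝ) + 1) ≤ ε * (c * 2 ^ n) := hN n hNn
  have hca : c * 2 ^ n ≤ a := by linarith [h2na]
  have hLHS : Real.log (Real.log (1 / r)) ≤ ε * a := by
    calc Real.log (Real.log (1 / r)) ≤ Real.log (β ^ n * M) := hlog2
      _ = n * Real.log β + Real.log M := hlog3
      _ ≤ K * ((n:ℝ) + 1) := hmid
      _ ≤ ε * (c * 2 ^ n) := hεbound
      _ ≤ ε * a := mul_le_mul_of_nonneg_left hca hε.le
  have hLHS0 : 0 ≤ Real.log (Real.log (1 / r)) := Real.log_nonneg hlr1.le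
  rw [Real.norm_eq_abs, Real.norm_eq_abs, abs_of_nonneg hLHS0]
  rw [abs_of_nonneg (by rw [← htdef, ← hadef]; exact ha0.le : (0:ℝ) ≤ Real.log (1 / φ r))]
  rw [← htdef, ← hadef]
  exact hLHS
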